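/- Let σ = ⊕[π_1,…,π_r] with r ≥ 2, where each π_k is a nonempty ⊕-indecomposable permutation, let p = (p_1,…,p_n) be a pin representation of σ, and let i_0 be the index of the child containing p_1. Then every child with index different from i_0 is read in one piece by p. -/

import Mathlib

namespace PinStmt

abbrev Point : Type := ℝ × ℝ

inductive Letter : Type
  | n1 | n2 | n3 | n4 | U | D | L | R
deriving DecidableEq

def Letter.isNum : Letter → Bool
  | .n1 | .n2 | .n3 | .n4 => true
  | _ => false

/-- `c` is one of the numeral letters 1,2,3,4. -/
def Letter.IsNumeral (c : Letter) : Prop := c.isNum = true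

/-- `c` is one of the direction letters U,D,L,R. -/
def Letter.IsDirection (c : Letter) : Prop := c.isNum = false

/-- `q i` lies strictly above all of `q 0, …, q (i-1)`. -/
def AboveAll (q : ℕ → Point) (i : ℕ) : Prop := ∀ j < i, (q j).2 < (q i).2
def BelowAll (q : ℕ → Point) (i : ℕ) : Prop := ∀ j < i, (q i).2 < (q j).2
def RightAll (q : ℕ → Point) (i : ℕ) : Prop := ∀ j < i, (q j).1 < (q i).1
def LeftAll  (q : ℕ → Point) (i : ℕ) : Prop := ∀ j < i, (q i).1 < (q j).1

/-- The vertical line through `q i` strictly separates `q (i-1)` from `{q j | j < i-1}`. -/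
def VLineSep (q : ℕ → Point) (i : ℕ) : Prop :=
  ((q (i - 1)).1 < (q i).1 ∧ ∀ j < i - 1, (q i).1 < (q j).1) ∨
  ((q i).1 < (q (i - 1)).1 ∧ ∀ j < i - 1, (q j).1 < (q i).1)

/-- The horizontal line through `q i` strictly separates `q (i-1)` from `{q j | j < i-1}`. -/
def HLineSep (q : ℕ → Point) (i : ℕ) : Prop :=
  ((q (i - 1)).2 < (q i).2 ∧ ∀ j < i - 1, (q i).2 < (q j).2) ∨
  ((q i).2 < (q (i - 1)).2 ∧ ∀ j < i - 1, (q j).2 < (q i).2)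

/-- Separation condition for the pin `q i`. -/
def SepCond (q : ℕ → Point) (i : ℕ) : Prop := VLineSep q i ∨ HLineSep q i

/-- Independence condition: neither line through `q i` splits `{q j | j < i}` in two
nonempty parts. -/
def IndepCond (q : ℕ → Point) (i : ℕ) : Prop :=
  ¬((∃ j < i, (q j).1 < (q i).1) ∧ (∃ j < i, (q i).1 < (q j).1)) ∧
  ¬((∃ j < i, (q j).2 < (q i).2) ∧ (∃ j < i, (q i).2 < (q j).2))

/-- `q i` lies outside the bounding box of `{q j | j < i}`. -/
def OutsideBox (q : ℕ → Point) (i : ℕ) : Prop :=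
  RightAll q i ∨ LeftAll q i ∨ AboveAll q i ∨ BelowAll q i

/-- `(q 0, …, q (m-1))` is a pin sequence. -/
def IsPinSeq (q : ℕ → Point) (m : ℕ) : Prop :=
  (∀ i < m, ∀ j < m, i ≠ j → (q i).1 ≠ (q j).1 ∧ (q i).2 ≠ (q j).2) ∧
  (∀ i, 1 ≤ i → i < m → OutsideBox q i ∧ (SepCond q i ∨ IndepCond q i))

/-- `(p 0, …, p (n-1))` is a pin representation of `σ`, where `f` sends the time index of a
pin to the position (index) of the corresponding point in the diagram of `σ`. -/
def IsPinReprWith {n : ℕ} (σ : Equiv.Perm (Fin n)) (p : ℕ → Point)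
    (f : Fin n ≃ Fin n) : Prop :=
  IsPinSeq p n ∧ ∀ j k : Fin n,
    ((p j.val).1 < (p k.val).1 ↔ f j < f k) ∧
    ((p j.val).2 < (p k.val).2 ↔ σ (f j) < σ (f k))

def IsPinRepr {n : ℕ} (σ : Equiv.Perm (Fin n)) (p : ℕ → Point) : Prop :=
  ∃ f, IsPinReprWith σ p f

/-- `σ` is a pin-permutation. -/
def IsPinPerm {n : ℕ} (σ : Equiv.Perm (Fin n)) : Prop := ∃ p, IsPinRepr σ p

/-- Prepend the origin `p0` to the sequence of pins `p`. -/
def withOrigin (p0 : Point) (p : ℕ → Point) : ℕ → Point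
  | 0 => p0
  | i + 1 => p i

/-- The letter encoding the pin `q i` (where `q 0` is the origin). -/
def LetterIs (q : ℕ → Point) (i : ℕ) : Letter → Prop
  | .U => 2 ≤ i ∧ SepCond q i ∧ AboveAll q i
  | .D => 2 ≤ i ∧ SepCond q i ∧ BelowAll q i
  | .L => 2 ≤ i ∧ SepCond q i ∧ LeftAll q i
  | .R => 2 ≤ i ∧ SepCond q i ∧ RightAll q i
  | .n1 => IndepCond q i ∧ RightAll q i ∧ AboveAll q i
  | .n2 => IndepCond q i ∧ LeftAll q i ∧ AboveAll q i
  | .n3 => IndepCond q i ∧ LeftAll q i ∧ BelowAll q i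
  | .n4 => IndepCond q i ∧ RightAll q i ∧ BelowAll q i

/-- `w` is the pin word associated with the pin sequence `(q 0, q 1, …, q n)`,
whose origin is `q 0`. -/
def WordOf (q : ℕ → Point) (n : ℕ) (w : List Letter) : Prop :=
  w.length = n ∧ ∀ i < n, LetterIs q (i + 1) (w.getD i Letter.U)

/-- `P(σ)`: the set of pin words of the permutation `σ`. -/
def PinWords {n : ℕ} (σ : Equiv.Perm (Fin n)) : Set (List Letter) :=
  { w | ∃ (p : ℕ → Point) (p0 : Point), IsPinRepr σ p ∧
        IsPinSeq (withOrigin p0 p) (n + 1) ∧ WordOf (withOrigin p0 p) n w }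

/-- The set of pin words associated with the fixed pin representation `p`
over all admissible origins. -/
def WordsOfRepr (n : ℕ) (p : ℕ → Point) : Set (List Letter) :=
  { w | ∃ p0 : Point, IsPinSeq (withOrigin p0 p) (n + 1) ∧ WordOf (withOrigin p0 p) n w }

/-- `(p 0, …, p (n-1))` is a proper pin sequence: every pin from the third one on
satisfies the separation condition. -/
def IsProperSeq (p : ℕ → Point) (n : ℕ) : Prop :=
  IsPinSeq p n ∧ ∀ i, 2 ≤ i → i < n → SepCond p i

/-- `σ` is a proper pin-permutation. -/
def IsProperPinPerm {n : ℕ} (σ : Equiv.Perm (Fin n)) : Prop :=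
  ∃ p, IsPinRepr σ p ∧ IsProperSeq p n

/-- A strict pin word: a numeral followed only by directions. -/
def IsStrict (w : List Letter) : Prop :=
  ∃ c cs, w = c :: cs ∧ c.IsNumeral ∧ ∀ d ∈ cs, d.IsDirection

/-- A quasi-strict pin word: two numerals followed only by directions. -/
def IsQuasiStrict (w : List Letter) : Prop :=
  ∃ c₁ c₂ cs, w = c₁ :: c₂ :: cs ∧ c₁.IsNumeral ∧ c₂.IsNumeral ∧ ∀ d ∈ cs, d.IsDirection

/-- `w` is a pin word (of some permutation). -/
def IsPinWord (w : List Letter) : Prop :=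
  ∃ (n : ℕ) (σ : Equiv.Perm (Fin n)), w ∈ PinWords σ

/-- `SP`: the set of strict pin words. -/
def SPset : Set (List Letter) := { w | IsPinWord w ∧ IsStrict w }

def phi2 : Letter → Letter → List Letter
  | .n1, .R => [.R, .U, .R]
  | .n2, .R => [.L, .U, .R]
  | .n3, .R => [.L, .D, .R]
  | .n4, .R => [.R, .D, .R]
  | .n1, .L => [.R, .U, .L]
  | .n2, .L => [.L, .U, .L]
  | .n3, .L => [.L, .D, .L]
  | .n4, .L => [.R, .D, .L]
  | .n1, .U => [.U, .R, .U]
  | .n2, .U => [.U, .L, .U]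
  | .n3, .U => [.D, .L, .U]
  | .n4, .U => [.D, .R, .U]
  | .n1, .D => [.U, .R, .D]
  | .n2, .D => [.U, .L, .D]
  | .n3, .D => [.D, .L, .D]
  | .n4, .D => [.D, .R, .D]
  | _, _ => []

def phi1 : Letter → Set (List Letter)
  | .n1 => {[.U, .R], [.R, .U]}
  | .n2 => {[.U, .L], [.L, .U]}
  | .n3 => {[.D, .L], [.L, .D]}
  | .n4 => {[.R, .D], [.D, .R]}
  | _ => ∅

def phiInv2 : Letter → Letter → Letter
  | .U, .R => .n1
  | .R, .U => .n1
  | .U, .L => .n2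
  | .L, .U => .n2
  | .D, .L => .n3
  | .L, .D => .n3
  | .R, .D => .n4
  | .D, .R => .n4
  | _, _ => .n1

/-- `φ(u)`, as a set of words: a two-element set when `u` is a single numeral,
a singleton `{φ(u)}` when `u` is a strict pin word of length at least 2, and
the identity (as a singleton) on words of `M`. -/
def phiSet : List Letter → Set (List Letter)
  | [] => {[]}
  | [c] => if c.isNum then phi1 c else {[c]}
  | c :: d :: rest => if c.isNum then {phi2 c d ++ rest} else {c :: d :: rest}

/-- The quadrant numeral `q(c,d)`. -/
def quadNum (c d : Letter) : Letter :=
  if c.isNum then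
    match phi2 c d with
    | [_, b, e] => phiInv2 b e
    | _ => Letter.n1
  else phiInv2 c d

/-- `us` is the strong numeral-led factor decomposition of `u`. -/
def IsSNLD (u : List Letter) (us : List (List Letter)) : Prop :=
  us.flatten = u ∧ ∀ v ∈ us, IsStrict v

def interleave : List (List Letter) → List (List Letter) → List Letter
  | [], _ => []
  | v :: vs, [] => v ++ interleave vs []
  | v :: vs, w :: ws => v ++ w ++ interleave vs ws

/-- The condition on the pieces `v^(i)`, `w^(i)`, `u^(i)` in the definition of `≼`. -/
def PieceCond (v wi ui : List Letter) : Prop :=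
  (∃ c cs, wi = c :: cs ∧ c.IsNumeral ∧ wi = ui) ∨
  (∃ d ds c, wi = d :: ds ∧ d.IsDirection ∧ v ≠ [] ∧ v.getLast? = some c ∧
    ui = quadNum c d :: ds)

/-- The order `u ≼ w` on pin words. -/
def PinOrder (u w : List Letter) : Prop :=
  ∃ us, IsSNLD u us ∧
    ∃ vs ws : List (List Letter), ws.length = us.length ∧ vs.length = us.length + 1 ∧
      w = interleave vs ws ∧
      ∀ i < us.length, PieceCond (vs.getD i []) (ws.getD i []) (us.getD i [])

def IsVert (c : Letter) : Prop := c = Letter.U ∨ c = Letter.D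
def IsHoriz (c : Letter) : Prop := c = Letter.L ∨ c = Letter.R

/-- `M`: words over `{U,D,L,R}` of length at least 2 with no factor in
`{UU,UD,DU,DD,LL,LR,RL,RR}`. -/
def MSet : Set (List Letter) :=
  { w | 2 ≤ w.length ∧ (∀ c ∈ w, c.IsDirection) ∧
        ∀ a c : Letter, [a, c] <:+: w →
          ¬(IsVert a ∧ IsVert c) ∧ ¬(IsHoriz a ∧ IsHoriz c) }

/-- `A*`: all words over the direction alphabet `A = {U,D,L,R}`. -/
def Astar : Set (List Letter) := { w | ∀ c ∈ w, c.IsDirection }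

/-- Concatenation of languages. -/
def LMul (X Y : Set (List Letter)) : Set (List Letter) :=
  { w | ∃ x ∈ X, ∃ y ∈ Y, w = x ++ y }

/-- The language `L(u) = A* φ(u^(1)) A* φ(u^(2)) … A* φ(u^(j)) A*`. -/
def LangOf (u : List Letter) : Set (List Letter) :=
  { m | ∃ us, IsSNLD u us ∧
      ∃ vs ws : List (List Letter), ws.length = us.length ∧ vs.length = us.length + 1 ∧
        m = interleave vs ws ∧ (∀ v ∈ vs, v ∈ Astar) ∧
        ∀ i < us.length, ws.getD i [] ∈ phiSet (us.getD i []) }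

/-- The language `L_π = ⋃_{u ∈ P(π)} L(u)`. -/
def Lperm {n : ℕ} (π : Equiv.Perm (Fin n)) : Set (List Letter) :=
  { m | ∃ u ∈ PinWords π, m ∈ LangOf u }

/-- `π ≤ σ`: the permutation `π` is a pattern of the permutation `σ`. -/
def IsPattern {k n : ℕ} (π : Equiv.Perm (Fin k)) (σ : Equiv.Perm (Fin n)) : Prop :=
  ∃ g : Fin k → Fin n, StrictMono g ∧ ∀ a b : Fin k, (π a < π b ↔ σ (g a) < σ (g b))

/-- `q i` lies in the quadrant (given by a numeral letter) of the bounding box of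
`{q j | j < m}`. -/
def InQuadOf (q : ℕ → Point) (i m : ℕ) : Letter → Prop
  | .n1 => (∀ j < m, (q j).1 < (q i).1) ∧ (∀ j < m, (q j).2 < (q i).2)
  | .n2 => (∀ j < m, (q i).1 < (q j).1) ∧ (∀ j < m, (q j).2 < (q i).2)
  | .n3 => (∀ j < m, (q i).1 < (q j).1) ∧ (∀ j < m, (q i).2 < (q j).2)
  | .n4 => (∀ j < m, (q j).1 < (q i).1) ∧ (∀ j < m, (q i).2 < (q j).2)
  | _ => False


/-- `σ = ⊕[π_0, …, π_(r-1)]` where the `k`-th child occupies positions and values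
`[b k, b (k+1))`. -/
def SumDecomp {n : ℕ} (σ : Equiv.Perm (Fin n)) (r : ℕ) (b : ℕ → ℕ) : Prop :=
  b 0 = 0 ∧ b r = n ∧ (∀ k < r, b k < b (k + 1)) ∧
  ∀ k < r, ∀ i : Fin n, b k ≤ i.val → i.val < b (k + 1) →
    b k ≤ (σ i).val ∧ (σ i).val < b (k + 1)

/-- The child of `σ` occupying positions `[lo, hi)` is ⊕-indecomposable. -/
def ChildIndecomp {n : ℕ} (σ : Equiv.Perm (Fin n)) (lo hi : ℕ) : Prop :=
  ¬ ∃ m, lo < m ∧ m < hi ∧ ∀ i : Fin n, lo ≤ i.val → i.val < m → (σ i).val < m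

/-- The pin read at time `a` belongs to the `k`-th child (`f` sends times to positions). -/
def PinInChild {n : ℕ} (b : ℕ → ℕ) (f : Fin n ≃ Fin n) (a : Fin n) (k : ℕ) : Prop :=
  b k ≤ (f a).val ∧ (f a).val < b (k + 1)

/-- The set of (times of) pins belonging to the `k`-th child. -/
def ChildPins {n : ℕ} (b : ℕ → ℕ) (f : Fin n ≃ Fin n) (k : ℕ) : Set (Fin n) :=
  { a | PinInChild b f a k }

/-- The starting times of the maximal runs of consecutive reading times in `S`. -/
def PieceStarts {n : ℕ} (S : Set (Fin n)) : Set (Fin n) :=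
  { a | a ∈ S ∧ ∀ c : Fin n, c.val + 1 = a.val → c ∉ S }

/-- `S` is read in exactly `k` pieces. -/
def ReadInPieces {n : ℕ} (S : Set (Fin n)) (k : ℕ) : Prop := (PieceStarts S).ncard = k

/-- The pins of `D` are all read before the pins of `C`. -/
def ReadBefore {n : ℕ} (D C : Set (Fin n)) : Prop := ∀ a ∈ D, ∀ c ∈ C, a < c

/-- The infinite oscillating sequence `ω = 3 1 5 2 7 4 9 6 …` (1-indexed). -/
def omegaSeq (i : ℕ) : ℕ := if i = 2 then 1 else if i % 2 = 1 then i + 2 else i - 2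

/-- `π` is a pattern of some prefix of the infinite oscillating sequence `ω`. -/
def IsOmegaPattern {k : ℕ} (π : Equiv.Perm (Fin k)) : Prop :=
  ∃ g : Fin k → ℕ, StrictMono g ∧ (∀ a, 1 ≤ g a) ∧
    ∀ a b : Fin k, (π a < π b ↔ omegaSeq (g a) < omegaSeq (g b))

/-- The interval of positions `[lo, lo+len)` is a block of `σ`. -/
def IsBlockOf {n : ℕ} (σ : Equiv.Perm (Fin n)) (lo len : ℕ) : Prop :=
  lo + len ≤ n ∧ ∃ vlo, ∀ i : Fin n,
    (lo ≤ i.val ∧ i.val < lo + len) ↔ (vlo ≤ (σ i).val ∧ (σ i).val < vlo + len)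

/-- `σ` is a simple permutation. -/
def IsSimplePerm {n : ℕ} (σ : Equiv.Perm (Fin n)) : Prop :=
  4 ≤ n ∧ ∀ lo len, IsBlockOf σ lo len → len ≤ 1 ∨ len = n

/-- `π` is the permutation whose one-line notation is the list `l`. -/
def PermMatches {k : ℕ} (π : Equiv.Perm (Fin k)) (l : List ℕ) : Prop :=
  l.length = k ∧ ∀ i : Fin k, (π i).val + 1 = l.getD i.val 0

/-- `ξ` is an increasing oscillation. -/
def IsIncrOsc {k : ℕ} (ξ : Equiv.Perm (Fin k)) : Prop :=
  PermMatches ξ [1] ∨ PermMatches ξ [2, 1] ∨ PermMatches ξ [2, 3, 1] ∨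
  PermMatches ξ [3, 1, 2] ∨ (4 ≤ k ∧ IsSimplePerm ξ ∧ IsOmegaPattern ξ)

/-- The child of `σ` occupying positions `[lo, hi)` is order-isomorphic to `ξ`. -/
def ChildIsPerm {n m : ℕ} (σ : Equiv.Perm (Fin n)) (lo hi : ℕ)
    (ξ : Equiv.Perm (Fin m)) : Prop :=
  lo + m = hi ∧ ∀ (a c : Fin m) (ia ic : Fin n), ia.val = lo + a.val → ic.val = lo + c.val →
    ((σ ia).val < (σ ic).val ↔ (ξ a).val < (ξ c).val)

/-- The child of `σ` occupying positions `[lo, hi)` is an increasing oscillation. -/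
def ChildIsIncrOsc {n : ℕ} (σ : Equiv.Perm (Fin n)) (lo hi : ℕ) : Prop :=
  ∃ (m : ℕ) (ξ : Equiv.Perm (Fin m)), IsIncrOsc ξ ∧ ChildIsPerm σ lo hi ξ

/-- `τ = ⊕[ξ, η]`. -/
def IsDSum2 {m k l : ℕ} (τ : Equiv.Perm (Fin m)) (ξ : Equiv.Perm (Fin k))
    (η : Equiv.Perm (Fin l)) : Prop :=
  m = k + l ∧ (∀ i : Fin m, i.val < k → (τ i).val < k) ∧
    ChildIsPerm τ 0 k ξ ∧ ChildIsPerm τ k m η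

/-- The origin `p0` lies in quadrant 1 of the bounding box of `{p j | j < n}`. -/
def OriginQ1 (p0 : Point) (p : ℕ → Point) (n : ℕ) : Prop :=
  ∀ j < n, (p j).1 < p0.1 ∧ (p j).2 < p0.2

/-- The origin `p0` lies in quadrant 3 of the bounding box of `{p j | j < n}`. -/
def OriginQ3 (p0 : Point) (p : ℕ → Point) (n : ℕ) : Prop :=
  ∀ j < n, p0.1 < (p j).1 ∧ p0.2 < (p j).2

/-- `P^(1)(ξ)`: pin words of `ξ` whose origin lies in quadrant 1 w.r.t. the points of `ξ`. -/
def PinWordsQ1 {n : ℕ} (ξ : Equiv.Perm (Fin n)) : Set (List Letter) :=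
  { w | ∃ (p : ℕ → Point) (p0 : Point), IsPinRepr ξ p ∧
        IsPinSeq (withOrigin p0 p) (n + 1) ∧ WordOf (withOrigin p0 p) n w ∧ OriginQ1 p0 p n }

/-- `P^(3)(ξ)`: pin words of `ξ` whose origin lies in quadrant 3 w.r.t. the points of `ξ`. -/
def PinWordsQ3 {n : ℕ} (ξ : Equiv.Perm (Fin n)) : Set (List Letter) :=
  { w | ∃ (p : ℕ → Point) (p0 : Point), IsPinRepr ξ p ∧
        IsPinSeq (withOrigin p0 p) (n + 1) ∧ WordOf (withOrigin p0 p) n w ∧ OriginQ3 p0 p n }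

/-- The shuffle product of two sequences of sets of words. -/
def ShuffleSeq : List (Set (List Letter)) → List (Set (List Letter)) → Set (List Letter)
  | [], [] => {[]}
  | X :: As, [] => { w | ∃ x ∈ X, ∃ t ∈ ShuffleSeq As [], w = x ++ t }
  | [], Y :: Bs => { w | ∃ y ∈ Y, ∃ t ∈ ShuffleSeq ([] : List (Set (List Letter))) Bs, w = y ++ t }
  | X :: As, Y :: Bs =>
      { w | (∃ x ∈ X, ∃ t ∈ ShuffleSeq As (Y :: Bs), w = x ++ t) ∨
            (∃ y ∈ Y, ∃ t ∈ ShuffleSeq (X :: As) Bs, w = y ++ t) }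
  termination_by A B => A.length + B.length

/-- The `p`-fold repetition `x^p` of the word `x`. -/
def repW (p : ℕ) (x : List Letter) : List Letter := (List.replicate p x).flatten

/-- The points of `ξ` at positions `i` and `j` form an active knight of `ξ`:
they occur (in some order) as the first two pins of some pin representation of `ξ`. -/
def ActiveKnight {k : ℕ} (ξ : Equiv.Perm (Fin k)) (i j : Fin k) : Prop :=
  ∃ (p : ℕ → Point) (f : Fin k ≃ Fin k) (h2 : 2 ≤ k),
    IsPinReprWith ξ p f ∧
    ((f ⟨0, by omega⟩ = i ∧ f ⟨1, by omega⟩ = j) ∨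
     (f ⟨0, by omega⟩ = j ∧ f ⟨1, by omega⟩ = i))

/-- The points at positions `i`, `j` are in horizontal knight position. -/
def KnightH {k : ℕ} (ξ : Equiv.Perm (Fin k)) (i j : Fin k) : Prop :=
  (i.val + 2 = j.val ∨ j.val + 2 = i.val) ∧
  ((ξ i).val + 1 = (ξ j).val ∨ (ξ j).val + 1 = (ξ i).val)

/-- The points at positions `i`, `j` are in vertical knight position. -/
def KnightV {k : ℕ} (ξ : Equiv.Perm (Fin k)) (i j : Fin k) : Prop :=
  (i.val + 1 = j.val ∨ j.val + 1 = i.val) ∧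
  ((ξ i).val + 2 = (ξ j).val ∨ (ξ j).val + 2 = (ξ i).val)

inductive KType : Type
  | H | V

def KnightOfType {k : ℕ} (t : KType) (ξ : Equiv.Perm (Fin k)) (i j : Fin k) : Prop :=
  match t with
  | .H => KnightH ξ i j
  | .V => KnightV ξ i j

/-- The increasing oscillation `ξ` has type `(x, y)`: its lower-left active knight
(the one containing the leftmost point) has knight-position type `x` and its
upper-right active knight (the one containing the rightmost point) has type `y`. -/
def HasOscType {k : ℕ} (ξ : Equiv.Perm (Fin k)) (x y : KType) : Prop :=
  ∃ i j i' j' : Fin k, ActiveKnight ξ i j ∧ ActiveKnight ξ i' j' ∧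
    i.val = 0 ∧ j'.val + 1 = k ∧ KnightOfType x ξ i j ∧ KnightOfType y ξ i' j'

/-- The permutation 21. -/
def perm21 : Equiv.Perm (Fin 2) := Equiv.swap 0 1

/-- The permutation 12. -/
def perm12 : Equiv.Perm (Fin 2) := Equiv.refl (Fin 2)

def EndsH (w : List Letter) : Prop := w.getLast? = some Letter.R ∨ w.getLast? = some Letter.L
def EndsV (w : List Letter) : Prop := w.getLast? = some Letter.U ∨ w.getLast? = some Letter.D

/-- `Q⁻`: quasi-strict pin words of 21. -/
def Qminus : Set (List Letter) := { w | w ∈ PinWords perm21 ∧ IsQuasiStrict w }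
/-- `S⁻_H`: strict pin words of 21 ending with R or L. -/
def SminusH : Set (List Letter) := { w | w ∈ PinWords perm21 ∧ IsStrict w ∧ EndsH w }
/-- `S⁻_V`: strict pin words of 21 ending with U or D. -/
def SminusV : Set (List Letter) := { w | w ∈ PinWords perm21 ∧ IsStrict w ∧ EndsV w }
/-- `Q⁺`: quasi-strict pin words of 12. -/
def Qplus : Set (List Letter) := { w | w ∈ PinWords perm12 ∧ IsQuasiStrict w }
/-- `S⁺_H`: strict pin words of 12 ending with R or L. -/
def SplusH : Set (List Letter) := { w | w ∈ PinWords perm12 ∧ IsStrict w ∧ EndsH w }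
/-- `S⁺_V`: strict pin words of 12 ending with U or D. -/
def SplusV : Set (List Letter) := { w | w ∈ PinWords perm12 ∧ IsStrict w ∧ EndsV w }

/-- `P^mix(ξ_i, ξ_j)` for `τ = ⊕[ξ_i, ξ_j]` with `|ξ_i| = s1`: pin words associated
with a pin representation of `τ` reading one of the two children in two pieces. -/
def Pmix {m : ℕ} (τ : Equiv.Perm (Fin m)) (s1 : ℕ) : Set (List Letter) :=
  { w | ∃ (p : ℕ → Point) (p0 : Point) (f : Fin m ≃ Fin m),
      IsPinReprWith τ p f ∧ IsPinSeq (withOrigin p0 p) (m + 1) ∧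
      WordOf (withOrigin p0 p) m w ∧
      (ReadInPieces { a : Fin m | (f a).val < s1 } 2 ∨
       ReadInPieces { a : Fin m | s1 ≤ (f a).val } 2) }

/-- The set of words `{13, 23, 33, 43, 1D, 4D}`. -/
def W13D : Set (List Letter) :=
  {[Letter.n1, Letter.n3], [Letter.n2, Letter.n3], [Letter.n3, Letter.n3],
   [Letter.n4, Letter.n3], [Letter.n1, Letter.D], [Letter.n4, Letter.D]}

/-- The set of words `{13, 23, 33, 43, 1L, 2L}`. -/
def W13L : Set (List Letter) :=
  {[Letter.n1, Letter.n3], [Letter.n2, Letter.n3], [Letter.n3, Letter.n3],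
   [Letter.n4, Letter.n3], [Letter.n1, Letter.L], [Letter.n2, Letter.L]}

/-- `M_2 = {UR, UL, DR, DL, RU, RD, LU, LD}`. -/
def M2Set : Set (List Letter) :=
  {[Letter.U, Letter.R], [Letter.U, Letter.L], [Letter.D, Letter.R], [Letter.D, Letter.L],
   [Letter.R, Letter.U], [Letter.R, Letter.D], [Letter.L, Letter.U], [Letter.L, Letter.D]}

/-- `E^s_π`: the words `φ(u)` for `u ∈ P(π)` strict. -/
def EsSet {n : ℕ} (π : Equiv.Perm (Fin n)) : Set (List Letter) :=
  { v | ∃ u ∈ PinWords π, IsStrict u ∧ v ∈ phiSet u }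

/-- `E^qs_π`: the words `φ(u^(2))` for `u = u^(1)u^(2) ∈ P(π)` quasi-strict. -/
def EqsSet {n : ℕ} (π : Equiv.Perm (Fin n)) : Set (List Letter) :=
  { v | ∃ u ∈ PinWords π, IsQuasiStrict u ∧ ∃ u1 u2, IsSNLD u [u1, u2] ∧ v ∈ phiSet u2 }


private lemma core_lemma {p : ℕ → Point} {t u q : ℕ} (hu2 : 2 ≤ u) (htu : t < u) (hqt : q < t)
    (hzx : (p t).2 < (p u).2) (h0x : (p 0).2 < (p u).2) (hR : RightAll p u)
    (hcond : SepCond p u ∨ IndepCond p u) (hne : (p u).2 ≠ (p q).2) :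
    (p q).2 < (p u).2 := by
  by_contra hcon
  have hqx : (p u).2 < (p q).2 := lt_of_le_of_ne (not_lt.1 hcon) hne
  rcases hcond with hsep | hind
  · rcases hsep with hv | hh
    · rcases hv with ⟨h1, hall⟩ | ⟨h1, hall⟩
      · exact lt_asymm (hR 0 (by omega)) (hall 0 (by omega))
      · exact lt_asymm (hR (u - 1) (by omega)) h1
    · rcases hh with ⟨h1, hall⟩ | ⟨h1, hall⟩
      · exact lt_asymm h0x (hall 0 (by omega))
      · exact lt_asymm hqx (hall q (by omega))
  · exact hind.2 ⟨⟨t, htu, hzx⟩, ⟨q, hqt.trans htu, hqx⟩⟩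

private lemma main_lemma {n : ℕ} {p : ℕ → Point} (hseq : IsPinSeq p n) (S : Set (Fin n))
    (hside : ∀ w : Fin n, w ∉ S →
      (∀ a ∈ S, (p w.val).1 < (p a.val).1 ∧ (p w.val).2 < (p a.val).2) ∨
      (∀ a ∈ S, (p a.val).1 < (p w.val).1 ∧ (p a.val).2 < (p w.val).2))
    (hn : 0 < n) (h0 : (⟨0, hn⟩ : Fin n) ∉ S)
    (t : Fin n) (ht : t ∉ S) (ht1 : 1 ≤ t.val)
    (htS : ∀ a ∈ S, (p t.val).1 < (p a.val).1 ∧ (p t.val).2 < (p a.val).2) :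
    ∀ u ∈ S, t < u → ∀ q ∈ S, q < t →
      (p q.val).1 < (p u.val).1 ∧ (p q.val).2 < (p u.val).2 := by
  intro u hu htu q hq hqt
  have htuv : t.val < u.val := htu
  have hqtv : q.val < t.val := hqt
  obtain ⟨hob, hcond⟩ := hseq.2 u.val (by omega) u.isLt
  have h0S : ∀ a ∈ S, (p 0).1 < (p a.val).1 ∧ (p 0).2 < (p a.val).2 := by
    rcases hside ⟨0, hn⟩ h0 with h | h
    · exact h
    · exfalso
      rcases hob with hR | hL | hA | hB
      · exact lt_asymm (hR 0 (by omega)) (h u hu).1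
      · exact lt_asymm (htS u hu).1 (hL t.val htuv)
      · exact lt_asymm (hA 0 (by omega)) (h u hu).2
      · exact lt_asymm (htS u hu).2 (hB t.val htuv)
  have hneq : u.val ≠ q.val := by omega
  have hne12 := hseq.1 u.val u.isLt q.val q.isLt hneq
  rcases hob with hR | hL | hA | hB
  · exact ⟨hR q.val (by omega),
      core_lemma (by omega) htuv hqtv (htS u hu).2 (h0S u hu).2 hR hcond hne12.2⟩
  · exact absurd (hL t.val htuv) (lt_asymm (htS u hu).1)
  · refine ⟨?_, hA q.val (by omega)⟩
    have hcond' : SepCond (fun j => ((p j).2, (p j).1)) u.val ∨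
        IndepCond (fun j => ((p j).2, (p j).1)) u.val := by
      rcases hcond with hs | hi
      · exact Or.inl hs.symm
      · exact Or.inr ⟨hi.2, hi.1⟩
    exact core_lemma (p := fun j => ((p j).2, (p j).1)) (by omega) htuv hqtv
      (htS u hu).1 (h0S u hu).1 hA hcond' hne12.1
  · exact absurd (hB t.val htuv) (lt_asymm (htS u hu).2)

private lemma isPinSeq_neg {p : ℕ → Point} {n : ℕ} (h : IsPinSeq p n) :
    IsPinSeq (fun j => (-(p j).1, -(p j).2)) n := by
  obtain ⟨h1, h2⟩ := h
  refine ⟨fun i hi j hj hij => ?_, fun i h1i hin => ?_⟩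
  · have := h1 i hi j hj hij
    simpa using this
  · obtain ⟨hob, hc⟩ := h2 i h1i hin
    constructor
    · rcases hob with h | h | h | h
      · exact Or.inr (Or.inl (fun j hj => neg_lt_neg (h j hj)))
      · exact Or.inl (fun j hj => neg_lt_neg (h j hj))
      · exact Or.inr (Or.inr (Or.inr (fun j hj => neg_lt_neg (h j hj))))
      · exact Or.inr (Or.inr (Or.inl (fun j hj => neg_lt_neg (h j hj))))
    · rcases hc with (hv | hh) | hind
      · refine Or.inl (Or.inl ?_)
        rcases hv with ⟨ha, hall⟩ | ⟨ha, hall⟩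
        · exact Or.inr ⟨neg_lt_neg ha, fun j hj => neg_lt_neg (hall j hj)⟩
        · exact Or.inl ⟨neg_lt_neg ha, fun j hj => neg_lt_neg (hall j hj)⟩
      · refine Or.inl (Or.inr ?_)
        rcases hh with ⟨ha, hall⟩ | ⟨ha, hall⟩
        · exact Or.inr ⟨neg_lt_neg ha, fun j hj => neg_lt_neg (hall j hj)⟩
        · exact Or.inl ⟨neg_lt_neg ha, fun j hj => neg_lt_neg (hall j hj)⟩
      · refine Or.inr ⟨?_, ?_⟩
        · rintro ⟨⟨j, hj, hlt⟩, ⟨j', hj', hlt'⟩⟩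
          exact hind.1 ⟨⟨j', hj', neg_lt_neg_iff.mp hlt'⟩, ⟨j, hj, neg_lt_neg_iff.mp hlt⟩⟩
        · rintro ⟨⟨j, hj, hlt⟩, ⟨j', hj', hlt'⟩⟩
          exact hind.2 ⟨⟨j', hj', neg_lt_neg_iff.mp hlt'⟩, ⟨j, hj, neg_lt_neg_iff.mp hlt⟩⟩

private lemma split_contra {n : ℕ} (σ : Equiv.Perm (Fin n)) (lo hi : ℕ) (hhi : hi ≤ n)
    (hmapin : ∀ i : Fin n, lo ≤ i.val → i.val < hi → lo ≤ (σ i).val ∧ (σ i).val < hi)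
    (hmaprev : ∀ i : Fin n, lo ≤ (σ i).val → (σ i).val < hi → lo ≤ i.val ∧ i.val < hi)
    (P Q : Set (Fin n)) (hPne : P.Nonempty) (hQne : Q.Nonempty)
    (hunion : ∀ i : Fin n, lo ≤ i.val → i.val < hi → i ∈ P ∨ i ∈ Q)
    (hPin : ∀ i ∈ P, lo ≤ i.val ∧ i.val < hi)
    (hQin : ∀ j ∈ Q, lo ≤ j.val ∧ j.val < hi)
    (hlt : ∀ i ∈ P, ∀ j ∈ Q, i.val < j.val ∧ (σ i).val < (σ j).val) :
    ∃ m', lo < m' ∧ m' < hi ∧ ∀ i : Fin n, lo ≤ i.val → i.val < m' → (σ i).val < m' := by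
  obtain ⟨j0, hj0Q, hmin0⟩ := Set.exists_min_image Q (fun j => j.val) (Set.toFinite Q) hQne
  obtain ⟨j1, hj1Q, hmin1⟩ := Set.exists_min_image Q (fun j => (σ j).val) (Set.toFinite Q) hQne
  set k := j0.val with hk
  set kv := (σ j1).val with hkv
  have hkQ : ∀ j ∈ Q, k ≤ j.val := hmin0
  have hkvQ : ∀ j ∈ Q, kv ≤ (σ j).val := hmin1
  have hPk : ∀ i ∈ P, i.val < k := fun i hi => (hlt i hi j0 hj0Q).1
  have hPkv : ∀ i ∈ P, (σ i).val < kv := fun i hi => (hlt i hi j1 hj1Q).2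
  have hkhi : k < hi := (hQin j0 hj0Q).2
  have hkvhi : kv < hi := (hmapin j1 (hQin j1 hj1Q).1 (hQin j1 hj1Q).2).2
  have hPfull : ∀ i : Fin n, lo ≤ i.val → i.val < k → i ∈ P := by
    intro i hA hB
    rcases hunion i hA (by omega) with h | h
    · exact h
    · exact absurd (hkQ i h) (by omega)
  have hPfullv : ∀ i : Fin n, lo ≤ (σ i).val → (σ i).val < kv → i ∈ P := by
    intro i hA hB
    obtain ⟨h3, h4⟩ := hmaprev i hA (by omega)
    rcases hunion i h3 h4 with h | h
    · exact h
    · exact absurd (hkvQ i h) (by omega)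
  have hcard1 : (Finset.Ico lo k).card ≤ (Finset.Ico lo kv).card := by
    apply Finset.card_le_card_of_injOn (fun v => if h : v < n then (σ ⟨v, h⟩).val else 0)
    · intro v hv
      simp only [Finset.coe_Ico, Set.mem_Ico, Finset.mem_coe, Finset.mem_Ico] at hv ⊢
      have hvn : v < n := by omega
      rw [dif_pos hvn]
      have hiP : (⟨v, hvn⟩ : Fin n) ∈ P := hPfull _ hv.1 hv.2
      exact ⟨(hmapin _ (hPin _ hiP).1 (hPin _ hiP).2).1, hPkv _ hiP⟩
    · intro v hv w hw hvw
      simp only [Finset.coe_Ico, Set.mem_Ico] at hv hw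
      have hvn : v < n := by omega
      have hwn : w < n := by omega
      simp only [dif_pos hvn, dif_pos hwn] at hvw
      have : (⟨v, hvn⟩ : Fin n) = ⟨w, hwn⟩ := σ.injective (Fin.ext hvw)
      simpa using this
  have hcard2 : (Finset.Ico lo kv).card ≤ (Finset.Ico lo k).card := by
    apply Finset.card_le_card_of_injOn (fun v => if h : v < n then (σ.symm ⟨v, h⟩).val else 0)
    · intro v hv
      simp only [Finset.coe_Ico, Set.mem_Ico, Finset.mem_coe, Finset.mem_Ico] at hv ⊢
      have hvn : v < n := by omega
      rw [dif_pos hvn]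
      have hσ : (σ (σ.symm ⟨v, hvn⟩)).val = v := by rw [Equiv.apply_symm_apply]
      have hiP : σ.symm ⟨v, hvn⟩ ∈ P :=
        hPfullv _ (by rw [hσ]; exact hv.1) (by rw [hσ]; exact hv.2)
      exact ⟨(hPin _ hiP).1, hPk _ hiP⟩
    · intro v hv w hw hvw
      simp only [Finset.coe_Ico, Set.mem_Ico] at hv hw
      have hvn : v < n := by omega
      have hwn : w < n := by omega
      simp only [dif_pos hvn, dif_pos hwn] at hvw
      have he : σ.symm (⟨v, hvn⟩ : Fin n) = σ.symm ⟨w, hwn⟩ := Fin.ext hvw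
      have := σ.symm.injective he
      simpa using this
  obtain ⟨i0, hi0⟩ := hPne
  have hks : k = kv := by
    rw [Nat.card_Ico, Nat.card_Ico] at hcard1 hcard2
    have h1 := (hPin i0 hi0).1
    have h2 := hPk i0 hi0
    have h3 := hPkv i0 hi0
    have h4 := (hmapin i0 (hPin i0 hi0).1 (hPin i0 hi0).2).1
    omega
  refine ⟨k, by have := (hPin i0 hi0).1; have := hPk i0 hi0; omega, hkhi, ?_⟩
  intro i hA hB
  have := hPkv i (hPfull i hA hB)
  omega

/-- Let `σ = ⊕[π_1, …, π_r]` with nonempty ⊕-indecomposable children,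
`p` a pin representation of `σ` and `i₀` the index of the child containing the first
pin. Every child with index different from `i₀` is read in one piece by `p`. -/
theorem statement_11 {n r : ℕ} (σ : Equiv.Perm (Fin n)) (b : ℕ → ℕ) (hr : 2 ≤ r)
    (hdec : SumDecomp σ r b)
    (hind : ∀ k < r, ChildIndecomp σ (b k) (b (k + 1)))
    (p : ℕ → Point) (f : Fin n ≃ Fin n) (hp : IsPinReprWith σ p f)
    (hn : 0 < n) (i₀ : ℕ) (hi₀ : i₀ < r) (h1 : PinInChild b f ⟨0, hn⟩ i₀) :
    ∀ m < r, m ≠ i₀ → ReadInPieces (ChildPins b f m) 1 := by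
  intro m hm hmne
  obtain ⟨hseq, hcmp⟩ := hp
  obtain ⟨hb0, hbr, hbstep, hdc⟩ := hdec
  have bmono : ∀ j, j ≤ r → ∀ i, i ≤ j → b i ≤ b j := by
    intro j
    induction j with
    | zero => intro _ i hi; have : i = 0 := Nat.le_zero.mp hi; rw [this]
    | succ j ih =>
      intro hjr i hij
      rcases Nat.eq_or_lt_of_le hij with h | h
      · rw [h]
      · exact le_trans (ih (by omega) i (by omega)) (le_of_lt (hbstep j (by omega)))
  have hfind : ∀ j, j ≤ r → ∀ v, v < b j → ∃ k, k < j ∧ b k ≤ v ∧ v < b (k + 1) := by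
    intro j
    induction j with
    | zero => intro _ v hv; rw [hb0] at hv; omega
    | succ j ih =>
      intro hjr v hv
      by_cases hbj : b j ≤ v
      · exact ⟨j, by omega, hbj, hv⟩
      · obtain ⟨k, hk1, hk2, hk3⟩ := ih (by omega) v (by omega)
        exact ⟨k, by omega, hk2, hk3⟩
  have hlohi : b m < b (m + 1) := hbstep m hm
  have hhin : b (m + 1) ≤ n := by rw [← hbr]; exact bmono r le_rfl (m + 1) (by omega)
  have hval_lt : ∀ i : Fin n, i.val < b m → (σ i).val < b m := by
    intro i hi
    obtain ⟨k, hk1, hk2, hk3⟩ := hfind m (by omega) i.val hi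
    have h5 := (hdc k (by omega) i hk2 hk3).2
    have h6 := bmono m (by omega) (k + 1) (by omega)
    omega
  have hval_ge : ∀ i : Fin n, b (m + 1) ≤ i.val → b (m + 1) ≤ (σ i).val := by
    intro i hi
    obtain ⟨k, hk1, hk2, hk3⟩ := hfind r le_rfl i.val (by rw [hbr]; exact i.isLt)
    have hkm : m + 1 ≤ k := by
      by_contra hcon
      have : b (k + 1) ≤ b (m + 1) := bmono (m + 1) (by omega) (k + 1) (by omega)
      omega
    have h5 := (hdc k hk1 i hk2 hk3).1
    have h6 := bmono k (by omega) (m + 1) hkm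
    omega
  have hmaprev : ∀ i : Fin n, b m ≤ (σ i).val → (σ i).val < b (m + 1) →
      b m ≤ i.val ∧ i.val < b (m + 1) := by
    intro i hiA hiB
    constructor
    · by_contra hcon
      have := hval_lt i (by omega)
      omega
    · by_contra hcon
      have := hval_ge i (by omega)
      omega
  set S : Set (Fin n) := ChildPins b f m with hSdef
  have hSin : ∀ a ∈ S, b m ≤ (f a).val ∧ (f a).val < b (m + 1) := fun a ha => ha
  have hzeroS : (⟨0, hn⟩ : Fin n) ∉ S := by
    intro hcon
    obtain ⟨hA, hB⟩ := hSin _ hcon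
    obtain ⟨hC, hD⟩ := h1
    rcases Nat.lt_or_ge i₀ m with h | h
    · have := bmono m (by omega) (i₀ + 1) (by omega)
      omega
    · have hmi : m < i₀ := by omega
      have := bmono i₀ (by omega) (m + 1) (by omega)
      omega
  have hside : ∀ w : Fin n, w ∉ S →
      (∀ a ∈ S, (p w.val).1 < (p a.val).1 ∧ (p w.val).2 < (p a.val).2) ∨
      (∀ a ∈ S, (p a.val).1 < (p w.val).1 ∧ (p a.val).2 < (p w.val).2) := by
    intro w hw
    have hw' : (f w).val < b m ∨ b (m + 1) ≤ (f w).val := by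
      by_contra hcon
      push_neg at hcon
      exact hw ⟨by omega, by omega⟩
    rcases hw' with h | h
    · left
      intro a ha
      obtain ⟨ha1, ha2⟩ := hSin a ha
      constructor
      · exact (hcmp w a).1.mpr (by rw [Fin.lt_def]; omega)
      · refine (hcmp w a).2.mpr ?_
        have hv1 := hval_lt (f w) h
        have hv2 := (hdc m hm (f a) ha1 ha2).1
        rw [Fin.lt_def]; omega
    · right
      intro a ha
      obtain ⟨ha1, ha2⟩ := hSin a ha
      constructor
      · exact (hcmp a w).1.mpr (by rw [Fin.lt_def]; omega)
      · refine (hcmp a w).2.mpr ?_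
        have hv1 := hval_ge (f w) h
        have hv2 := (hdc m hm (f a) ha1 ha2).2
        rw [Fin.lt_def]; omega
  have hSne : S.Nonempty := by
    have hbm : b m < n := by omega
    refine ⟨f.symm ⟨b m, hbm⟩, ?_⟩
    show b m ≤ (f (f.symm ⟨b m, hbm⟩)).val ∧ (f (f.symm ⟨b m, hbm⟩)).val < b (m + 1)
    rw [f.apply_symm_apply]
    exact ⟨le_rfl, hlohi⟩
  obtain ⟨a₀, ha₀S, ha₀min⟩ := Set.exists_min_image S id (Set.toFinite S) hSne
  have ha₀1 : 1 ≤ a₀.val := by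
    rcases Nat.eq_zero_or_pos a₀.val with h | h
    · exfalso
      have he : a₀ = (⟨0, hn⟩ : Fin n) := Fin.ext h
      rw [he] at ha₀S
      exact hzeroS ha₀S
    · exact h
  have hstart : a₀ ∈ PieceStarts S := by
    refine ⟨ha₀S, fun c hc hcS => ?_⟩
    have h2 : a₀.val ≤ c.val := ha₀min c hcS
    omega
  have huniq : ∀ a' ∈ PieceStarts S, a' = a₀ := by
    intro a' ha'
    obtain ⟨ha'S, ha'ps⟩ := ha'
    by_contra hane
    have hle : a₀.val ≤ a'.val := ha₀min a' ha'S
    have hne' : a₀.val ≠ a'.val := fun h => hane (Fin.ext h.symm)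
    have ha₀a' : a₀.val < a'.val := by omega
    have htn : a'.val - 1 < n := by omega
    have ht1v : (⟨a'.val - 1, htn⟩ : Fin n).val + 1 = a'.val := by
      show a'.val - 1 + 1 = a'.val; omega
    have htS : (⟨a'.val - 1, htn⟩ : Fin n) ∉ S := ha'ps _ ht1v
    have ha₀t : a₀.val < a'.val - 1 := by
      rcases Nat.lt_or_ge a₀.val (a'.val - 1) with h | h
      · exact h
      · exfalso
        have heq : a₀.val = a'.val - 1 := by omega
        have he : a₀ = (⟨a'.val - 1, htn⟩ : Fin n) := Fin.ext heq
        rw [he] at ha₀S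
        exact htS ha₀S
    have ht1 : 1 ≤ (⟨a'.val - 1, htn⟩ : Fin n).val := by
      show 1 ≤ a'.val - 1; omega
    have ha'C : (⟨a'.val - 1, htn⟩ : Fin n) < a' := by
      rw [Fin.lt_def]; show a'.val - 1 < a'.val; omega
    have ha₀A : a₀ < (⟨a'.val - 1, htn⟩ : Fin n) := by
      rw [Fin.lt_def]; show a₀.val < a'.val - 1; exact ha₀t
    rcases hside ⟨a'.val - 1, htn⟩ htS with hSW | hNE
    · have hkey := main_lemma hseq S hside hn hzeroS ⟨a'.val - 1, htn⟩ htS ht1 hSW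
      have hfalse : ∃ m', b m < m' ∧ m' < b (m + 1) ∧
          ∀ i : Fin n, b m ≤ i.val → i.val < m' → (σ i).val < m' := by
        apply split_contra σ (b m) (b (m + 1)) hhin (fun i => hdc m hm i) hmaprev
          (f '' {q | q ∈ S ∧ q < (⟨a'.val - 1, htn⟩ : Fin n)})
          (f '' {u | u ∈ S ∧ (⟨a'.val - 1, htn⟩ : Fin n) < u})
        · exact ⟨f a₀, a₀, ⟨ha₀S, ha₀A⟩, rfl⟩
        · exact ⟨f a', a', ⟨ha'S, ha'C⟩, rfl⟩
        · intro i hi1 hi2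
          have hiS : f.symm i ∈ S := by
            show b m ≤ (f (f.symm i)).val ∧ (f (f.symm i)).val < b (m + 1)
            rw [f.apply_symm_apply]
            exact ⟨hi1, hi2⟩
          rcases Nat.lt_or_ge (f.symm i).val (a'.val - 1) with h | h
          · exact Or.inl ⟨f.symm i, ⟨hiS, by rw [Fin.lt_def]; exact h⟩, f.apply_symm_apply i⟩
          · have hne2 : (f.symm i).val ≠ a'.val - 1 := by
              intro hcon
              have he : f.symm i = (⟨a'.val - 1, htn⟩ : Fin n) := Fin.ext hcon
              rw [he] at hiS
              exact htS hiS
            exact Or.inr ⟨f.symm i, ⟨hiS, by rw [Fin.lt_def]; show a'.val - 1 < _; omega⟩,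
              f.apply_symm_apply i⟩
        · rintro i ⟨q, ⟨hqS, _⟩, rfl⟩; exact hSin q hqS
        · rintro j ⟨u, ⟨huS, _⟩, rfl⟩; exact hSin u huS
        · rintro i ⟨q, ⟨hqS, hqlt⟩, rfl⟩ j ⟨u, ⟨huS, hugt⟩, rfl⟩
          have hk := hkey u huS hugt q hqS hqlt
          exact ⟨(hcmp q u).1.mp hk.1, (hcmp q u).2.mp hk.2⟩
      exact hind m hm hfalse
    · have hseqn := isPinSeq_neg hseq
      have hsiden : ∀ w : Fin n, w ∉ S →
          (∀ a ∈ S, ((fun j => (-(p j).1, -(p j).2)) w.val).1 <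
              ((fun j => (-(p j).1, -(p j).2)) a.val).1 ∧
            ((fun j => (-(p j).1, -(p j).2)) w.val).2 <
              ((fun j => (-(p j).1, -(p j).2)) a.val).2) ∨
          (∀ a ∈ S, ((fun j => (-(p j).1, -(p j).2)) a.val).1 <
              ((fun j => (-(p j).1, -(p j).2)) w.val).1 ∧
            ((fun j => (-(p j).1, -(p j).2)) a.val).2 <
              ((fun j => (-(p j).1, -(p j).2)) w.val).2) := by
        intro w hw
        rcases hside w hw with h | h
        · exact Or.inr fun a ha => ⟨neg_lt_neg (h a ha).1, neg_lt_neg (h a ha).2⟩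
        · exact Or.inl fun a ha => ⟨neg_lt_neg (h a ha).1, neg_lt_neg (h a ha).2⟩
      have hkey := main_lemma hseqn S hsiden hn hzeroS ⟨a'.val - 1, htn⟩ htS ht1
        (fun a ha => ⟨neg_lt_neg (hNE a ha).1, neg_lt_neg (hNE a ha).2⟩)
      have hfalse : ∃ m', b m < m' ∧ m' < b (m + 1) ∧
          ∀ i : Fin n, b m ≤ i.val → i.val < m' → (σ i).val < m' := by
        apply split_contra σ (b m) (b (m + 1)) hhin (fun i => hdc m hm i) hmaprev
          (f '' {u | u ∈ S ∧ (⟨a'.val - 1, htn⟩ : Fin n) < u})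
          (f '' {q | q ∈ S ∧ q < (⟨a'.val - 1, htn⟩ : Fin n)})
        · exact ⟨f a', a', ⟨ha'S, ha'C⟩, rfl⟩
        · exact ⟨f a₀, a₀, ⟨ha₀S, ha₀A⟩, rfl⟩
        · intro i hi1 hi2
          have hiS : f.symm i ∈ S := by
            show b m ≤ (f (f.symm i)).val ∧ (f (f.symm i)).val < b (m + 1)
            rw [f.apply_symm_apply]
            exact ⟨hi1, hi2⟩
          rcases Nat.lt_or_ge (f.symm i).val (a'.val - 1) with h | h
          · exact Or.inr ⟨f.symm i, ⟨hiS, by rw [Fin.lt_def]; exact h⟩, f.apply_symm_apply i⟩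
          · have hne2 : (f.symm i).val ≠ a'.val - 1 := by
              intro hcon
              have he : f.symm i = (⟨a'.val - 1, htn⟩ : Fin n) := Fin.ext hcon
              rw [he] at hiS
              exact htS hiS
            exact Or.inl ⟨f.symm i, ⟨hiS, by rw [Fin.lt_def]; show a'.val - 1 < _; omega⟩,
              f.apply_symm_apply i⟩
        · rintro i ⟨u, ⟨huS, _⟩, rfl⟩; exact hSin u huS
        · rintro j ⟨q, ⟨hqS, _⟩, rfl⟩; exact hSin q hqS
        · rintro i ⟨u, ⟨huS, hugt⟩, rfl⟩ j ⟨q, ⟨hqS, hqlt⟩, rfl⟩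
          have hk := hkey u huS hugt q hqS hqlt
          have hk1 : (p u.val).1 < (p q.val).1 := neg_lt_neg_iff.mp hk.1
          have hk2 : (p u.val).2 < (p q.val).2 := neg_lt_neg_iff.mp hk.2
          exact ⟨(hcmp u q).1.mp hk1, (hcmp u q).2.mp hk2⟩
      exact hind m hm hfalse
  have hset : PieceStarts S = {a₀} := by
    ext x
    simp only [Set.mem_singleton_iff]
    exact ⟨fun hx => huniq x hx, fun hx => hx ▸ hstart⟩
  show (PieceStarts S).ncard = 1
  rw [hset, Set.ncard_singleton]

end PinStmt
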